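/- Let p, q : ℝ → ℝ³ be differentiable maps such that ⟨p(s), q(t)⟩ = 1 for all s, t ∈ ℝ, and such that p′(s) ≠ 0 and q′(t) ≠ 0 for all s, t ∈ ℝ. Then for all s₁, s₂ ∈ ℝ the vectors p′(s₁) and p′(s₂) are linearly dependent. -/

import Mathlib

open Matrix in
/-- Auxiliary: if `t ↦ f t ⬝ᵥ c` is constant, then `deriv f t ⬝ᵥ c = 0`. -/
lemma dot_deriv_aux {f : ℝ → Fin 3 → ℝ} (hf : Differentiable ℝ f) (c : Fin 3 → ℝ) (k : ℝ)
    (h : ∀ t, f t ⬝ᵥ c = k) : ∀ t, deriv f t ⬝ᵥ c = 0 := by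
  intro t
  have h2 : ∀ i, HasDerivAt (fun t => f t i) (deriv f t i) t :=
    hasDerivAt_pi.mp (hf t).hasDerivAt
  have h3 : HasDerivAt (fun t => f t ⬝ᵥ c) (deriv f t ⬝ᵥ c) t := by
    simp only [dotProduct]
    exact HasDerivAt.fun_sum (fun i _ => (h2 i).mul_const (c i))
  have h4 : (fun t => f t ⬝ᵥ c) = fun _ => k := funext h
  have h5 : HasDerivAt (fun t => f t ⬝ᵥ c) 0 t := by
    rw [h4]; exact hasDerivAt_const t k
  exact h3.unique h5

open Matrix in
/-- if `p, q : ℝ → ℝ³` are differentiable with `⟨p(s), q(t)⟩ = 1` for all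
`s, t`, and `p′` and `q′` never vanish, then any two derivative vectors `p′(s₁)`, `p′(s₂)`
are linearly dependent. -/
theorem stmt18 (p q : ℝ → (Fin 3 → ℝ))
    (hp : Differentiable ℝ p) (hq : Differentiable ℝ q)
    (hpq : ∀ s t : ℝ, p s ⬝ᵥ q t = 1)
    (hp' : ∀ s : ℝ, deriv p s ≠ 0) (hq' : ∀ t : ℝ, deriv q t ≠ 0) :
    ∀ s₁ s₂ : ℝ, ¬ LinearIndependent ℝ ![deriv p s₁, deriv p s₂] := by
  intro s₁ s₂ hind
  -- key derivative identities
  have hA : ∀ s t, deriv p s ⬝ᵥ q t = 0 := fun s t =>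
    dot_deriv_aux hp (q t) 1 (fun s => hpq s t) s
  have hB : ∀ s t, p s ⬝ᵥ deriv q t = 0 := by
    intro s t
    rw [dotProduct_comm]
    exact dot_deriv_aux hq (p s) 1 (fun t => by rw [dotProduct_comm]; exact hpq s t) t
  have hC : ∀ s t, deriv p s ⬝ᵥ deriv q t = 0 := by
    intro s t
    rw [dotProduct_comm]
    exact dot_deriv_aux hq (deriv p s) 0
      (fun t => by rw [dotProduct_comm]; exact hA s t) t
  set v1 := deriv p s₁ with hv1
  set v2 := deriv p s₂ with hv2
  set w1 := q 0 with hw1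
  set w2 := deriv q 0 with hw2
  -- independence of w1, w2
  have hw : ∀ a b : ℝ, a • w1 + b • w2 = 0 → a = 0 ∧ b = 0 := by
    intro a b hab
    have h1 : p 0 ⬝ᵥ (a • w1 + b • w2) = 0 := by rw [hab]; simp
    rw [dotProduct_add, dotProduct_smul, dotProduct_smul,
      hpq 0 0, hB 0 0] at h1
    simp at h1
    have hb : b • w2 = 0 := by
      rw [h1, zero_smul, zero_add] at hab; exact hab
    rcases smul_eq_zero.mp hb with hb0 | hb0
    · exact ⟨h1, hb0⟩
    · exact absurd hb0 (hq' 0)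
  -- the four vectors v1, v2, w1, w2 would be linearly independent in ℝ³
  have hbig : LinearIndependent ℝ ![v1, v2, w1, w2] := by
    rw [Fintype.linearIndependent_iff]
    intro g hg
    rw [Fin.sum_univ_four] at hg
    simp only [Matrix.cons_val_zero, Matrix.cons_val_one, Matrix.head_cons,
      Matrix.cons_val_two, Matrix.tail_cons, Matrix.cons_val_three] at hg
    set u := g 2 • w1 + g 3 • w2 with hu
    have hvw : ∀ i : Fin 2, (![v1, v2] i) ⬝ᵥ u = 0 := by
      intro i
      fin_cases i <;>
        simp [hu, dotProduct_add, dotProduct_smul, hA, hC, hv1, hv2, hw1, hw2]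
    have hgu : (g 0 • v1 + g 1 • v2 + u) ⬝ᵥ u = 0 := by
      rw [show g 0 • v1 + g 1 • v2 + u = 0 by rw [hu]; linear_combination (norm := module) hg]
      simp
    have hv1u : v1 ⬝ᵥ u = 0 := hvw 0
    have hv2u : v2 ⬝ᵥ u = 0 := hvw 1
    rw [add_dotProduct, add_dotProduct, smul_dotProduct,
      smul_dotProduct, hv1u, hv2u] at hgu
    simp only [smul_zero, add_zero, zero_add] at hgu
    have hu0 : u = 0 := dotProduct_self_eq_zero.mp hgu
    obtain ⟨h2, h3⟩ := hw (g 2) (g 3) hu0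
    have hv : g 0 • v1 + g 1 • v2 = 0 := by
      have h' : g 0 • v1 + g 1 • v2 + u = 0 := by
        rw [hu]; linear_combination (norm := module) hg
      rw [hu0, add_zero] at h'; exact h'
    have := Fintype.linearIndependent_iff.mp hind
    have h01 := this ![g 0, g 1] (by
      rw [Fin.sum_univ_two]; simpa using hv)
    intro i
    fin_cases i
    · simpa using h01 0
    · simpa using h01 1
    · exact h2
    · exact h3
  have hcard := hbig.fintype_card_le_finrank
  simp [Module.finrank_pi] at hcard
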